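/- arXiv:1612.08611 — 4 statements merged into one kernel-verified Lean document; each statement's English description precedes it below -/
import Mathlib

section
/- Let H be a real inner product space and let p ≥ 2 be a real number. Then for all x, y ∈ H, ‖x+y‖^p − ‖x‖^p − p‖x‖^{p−2}⟨x,y⟩ ≤ (1/2)·p·(p−1)·(‖x‖^{p−2} + ‖x+y‖^{p−2})·‖y‖². -/
open scoped RealInnerProductSpace

-- L1: convexity gradient inequality for x^(p-1) via Bernoulli
lemma L1 {p s t : ℝ} (hp : 2 ≤ p) (hs : 0 ≤ s) (hst : s ≤ t) :
    t ^ (p - 1) - s ^ (p - 1) ≤ (p - 1) * t ^ (p - 2) * (t - s) := by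
  rcases eq_or_lt_of_le (hs.trans hst) with ht | ht
  · have hs0 : s = 0 := le_antisymm (hst.trans ht.symm.le) hs
    rw [← ht, hs0]
    simp
  have hb : 1 + (p - 1) * (s / t - 1) ≤ (1 + (s / t - 1)) ^ (p - 1) :=
    one_add_mul_self_le_rpow_one_add (by
      have : 0 ≤ s / t := div_nonneg hs ht.le
      linarith) (by linarith)
  rw [show 1 + (s / t - 1) = s / t by ring, Real.div_rpow hs ht.le] at hb
  have htp : (0:ℝ) < t ^ (p - 1) := Real.rpow_pos_of_pos ht _
  have h2 : t ^ (p - 1) * (1 + (p - 1) * (s / t - 1)) ≤ s ^ (p - 1) := by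
    rw [mul_comm]
    calc (1 + (p - 1) * (s / t - 1)) * t ^ (p - 1)
        ≤ s ^ (p - 1) / t ^ (p - 1) * t ^ (p - 1) := by
          exact mul_le_mul_of_nonneg_right hb htp.le
      _ = s ^ (p - 1) := div_mul_cancel₀ _ htp.ne'
  have hsplit : t ^ (p - 1) = t ^ (p - 2) * t := by
    rw [show p - 1 = (p - 2) + 1 by ring, Real.rpow_add_one ht.ne']
  rw [hsplit] at h2 ⊢
  have : t ^ (p - 2) * t * ((p - 1) * (s / t - 1)) = t ^ (p - 2) * ((p - 1) * (s - t)) := by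
    field_simp
  nlinarith [this]

lemma L2 {p s t M : ℝ} (hp : 2 ≤ p) (hs : 0 ≤ s) (hst : s ≤ t) (htM : t ≤ M) :
    p * t ^ (p - 1) - p * s ^ (p - 1) ≤ p * (p - 1) * M ^ (p - 2) * (t - s) := by
  have hL := L1 hp hs hst
  have hp0 : (0:ℝ) ≤ p := by linarith
  have hts : (0:ℝ) ≤ t - s := by linarith
  have hMt : t ^ (p - 2) ≤ M ^ (p - 2) :=
    Real.rpow_le_rpow (hs.trans hst) htM (by linarith)
  have h1 := mul_le_mul_of_nonneg_left hL hp0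
  have h2 := mul_le_mul_of_nonneg_right hMt hts
  have h3 := mul_le_mul_of_nonneg_left h2 (by nlinarith : (0:ℝ) ≤ p * (p - 1))
  nlinarith [h1, h3]

lemma claimB {p a b : ℝ} (hp : 2 ≤ p) (ha : 0 ≤ a) (hb : 0 ≤ b) :
    b ^ p - a ^ p - p * a ^ (p - 1) * (b - a) ≤
      p * (p - 1) / 2 * (max a b) ^ (p - 2) * (b - a) ^ 2 := by
  have hp1 : (1:ℝ) ≤ p := by linarith
  set C := p * (p - 1) / 2 * (max a b) ^ (p - 2) with hC
  set F : ℝ → ℝ := fun t => C * (t - a) ^ 2 - t ^ p + a ^ p + p * a ^ (p - 1) * (t - a) with hF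
  have hFa : F a = 0 := by simp [hF]
  have hder : ∀ t : ℝ, HasDerivAt F (C * (2 * (t - a)) - p * t ^ (p - 1) + p * a ^ (p - 1)) t := by
    intro t
    have h1 : HasDerivAt (fun t : ℝ => t ^ p) (p * t ^ (p - 1)) t :=
      Real.hasDerivAt_rpow_const (Or.inr hp1)
    have h2 : HasDerivAt (fun t : ℝ => (t - a) ^ 2) (2 * (t - a)) t := by
      have := ((hasDerivAt_id t).sub_const a).fun_pow 2
      simpa using this
    have h3 := ((h2.const_mul C).sub h1).add_const (a ^ p)
    have h4 := h3.add (((hasDerivAt_id t).sub_const a).const_mul (p * a ^ (p - 1)))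
    exact h4.congr_deriv (by ring)
  rcases le_total a b with hab | hab
  · have hMb : max a b = b := max_eq_right hab
    have hmono : MonotoneOn F (Set.Icc a b) := by
      apply monotoneOn_of_deriv_nonneg (convex_Icc a b)
      · exact fun t _ => ((hder t).continuousAt).continuousWithinAt
      · exact fun t _ => ((hder t).differentiableAt).differentiableWithinAt
      · intro t ht
        rw [interior_Icc] at ht
        obtain ⟨ht1, ht2⟩ := ht
        rw [(hder t).deriv, hC, hMb]
        have hL2 := L2 hp ha ht1.le ht2.le
        linarith
    have h0 : F a ≤ F b := hmono (Set.left_mem_Icc.2 hab) (Set.right_mem_Icc.2 hab) hab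
    rw [hFa] at h0
    simp only [hF] at h0
    linarith
  · have hMa : max a b = a := max_eq_left hab
    have hanti : AntitoneOn F (Set.Icc b a) := by
      apply antitoneOn_of_deriv_nonpos (convex_Icc b a)
      · exact fun t _ => ((hder t).continuousAt).continuousWithinAt
      · exact fun t _ => ((hder t).differentiableAt).differentiableWithinAt
      · intro t ht
        rw [interior_Icc] at ht
        obtain ⟨ht1, ht2⟩ := ht
        rw [(hder t).deriv, hC, hMa]
        have hL2 := L2 hp (hb.trans ht1.le) ht2.le (le_refl a)
        linarith
    have h0 : F a ≤ F b := hanti (Set.left_mem_Icc.2 hab) (Set.right_mem_Icc.2 hab) hab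
    rw [hFa] at h0
    simp only [hF] at h0
    linarith

/-- Key pointwise inequality (Lemma 3.6): for a real inner product space `H` and `p ≥ 2`,
`‖x+y‖^p − ‖x‖^p − p‖x‖^{p−2}⟨x,y⟫ ≤ (1/2)p(p−1)(‖x‖^{p−2} + ‖x+y‖^{p−2})‖y‖²`. -/
theorem pointwise_pth_power_inequality
    {H : Type*} [NormedAddCommGroup H] [InnerProductSpace ℝ H]
    (p : ℝ) (hp : 2 ≤ p) (x y : H) :
    ‖x + y‖ ^ p - ‖x‖ ^ p - p * ‖x‖ ^ (p - 2) * ⟪x, y⟫ ≤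
      (1 / 2) * p * (p - 1) * (‖x‖ ^ (p - 2) + ‖x + y‖ ^ (p - 2)) * ‖y‖ ^ (2 : ℕ) := by
  set a := ‖x‖ with hadef
  set b := ‖x + y‖ with hbdef
  set c := ‖y‖ with hcdef
  have ha : 0 ≤ a := norm_nonneg x
  have hb : 0 ≤ b := norm_nonneg _
  have hc : 0 ≤ c := norm_nonneg y
  have hs : b ^ 2 = a ^ 2 + 2 * ⟪x, y⟫ + c ^ 2 := norm_add_sq_real x y
  have habs : (b - a) ^ 2 ≤ c ^ 2 := by
    have h1 : |b - a| ≤ c := by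
      have := abs_norm_sub_norm_le (x + y) x
      simpa using this
    calc (b - a) ^ 2 = |b - a| ^ 2 := (sq_abs _).symm
      _ ≤ c ^ 2 := by
          apply pow_le_pow_left₀ (abs_nonneg _) h1
  have hsplit : a ^ (p - 1) = a ^ (p - 2) * a := by
    rcases eq_or_lt_of_le ha with h0 | h0
    · rw [← h0, Real.zero_rpow (by linarith : p - 1 ≠ 0), mul_zero]
    · rw [show p - 1 = (p - 2) + 1 by ring, Real.rpow_add_one h0.ne']
  have hmax : (max a b) ^ (p - 2) ≤ a ^ (p - 2) + b ^ (p - 2) := by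
    rcases max_choice a b with h | h <;> rw [h]
    · nlinarith [Real.rpow_nonneg hb (p - 2)]
    · nlinarith [Real.rpow_nonneg ha (p - 2)]
  have hBineq := claimB hp ha hb
  have hcoef : (0:ℝ) ≤ p * (p - 1) / 2 := by nlinarith
  have hB2 : b ^ p - a ^ p - p * a ^ (p - 1) * (b - a) ≤
      p * (p - 1) / 2 * (a ^ (p - 2) + b ^ (p - 2)) * (b - a) ^ 2 := by
    calc b ^ p - a ^ p - p * a ^ (p - 1) * (b - a)
        ≤ p * (p - 1) / 2 * (max a b) ^ (p - 2) * (b - a) ^ 2 := hBineq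
      _ ≤ p * (p - 1) / 2 * (a ^ (p - 2) + b ^ (p - 2)) * (b - a) ^ 2 := by
          apply mul_le_mul_of_nonneg_right _ (sq_nonneg _)
          exact mul_le_mul_of_nonneg_left hmax hcoef
  have hA0 : 0 ≤ a ^ (p - 2) := Real.rpow_nonneg ha _
  have hB0 : 0 ≤ b ^ (p - 2) := Real.rpow_nonneg hb _
  have hp0 : (0:ℝ) ≤ p := by linarith
  rw [hsplit] at hB2
  have hinner : ⟪x, y⟫ = (b ^ 2 - a ^ 2 - c ^ 2) / 2 := by linarith
  rw [hinner]
  nlinarith [mul_nonneg hp0 (mul_nonneg (sub_nonneg.2 habs) (mul_nonneg hA0 (by linarith : (0:ℝ) ≤ p - 2))),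
    mul_nonneg hp0 (mul_nonneg (sub_nonneg.2 habs) (mul_nonneg hB0 (by linarith : (0:ℝ) ≤ p - 1)))]
end

section
/- Let H be a real inner product space and let p ≥ 2 be a real number. For all x, y ∈ H there exists τ ∈ [0,1] such that ‖x+y‖^p − ‖x‖^p − p·‖x‖^{p−2}·⟨x,y⟩ ≤ (1/2)·p·(p−1)·‖x + τ·y‖^{p−2}·‖y‖². -/
open scoped RealInnerProductSpace

private lemma sq_rpow_aux {H : Type*} [NormedAddCommGroup H] (a : H) (c : ℝ) :
    ((‖a‖ ^ (2:ℕ) : ℝ)) ^ c = ‖a‖ ^ (2 * c) := by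
  rw [← Real.rpow_natCast ‖a‖ 2, ← Real.rpow_mul (norm_nonneg a)]
  norm_num

/-- Taylor-remainder step in the proof of Lemma 3.6: there exists `τ ∈ [0,1]` with
`‖x+y‖^p − ‖x‖^p − p‖x‖^{p−2}⟨x,y⟩ ≤ (1/2)p(p−1)‖x + τ·y‖^{p−2}‖y‖²`. -/
theorem taylor_remainder_pth_power
    {H : Type*} [NormedAddCommGroup H] [InnerProductSpace ℝ H]
    (p : ℝ) (hp : 2 ≤ p) (x y : H) :
    ∃ τ ∈ Set.Icc (0 : ℝ) 1,
      ‖x + y‖ ^ p - ‖x‖ ^ p - p * ‖x‖ ^ (p - 2) * ⟪x, y⟫ ≤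
        (1 / 2) * p * (p - 1) * ‖x + τ • y‖ ^ (p - 2) * ‖y‖ ^ (2 : ℕ) := by
  rcases eq_or_ne y 0 with hy | hy
  · refine ⟨0, Set.left_mem_Icc.2 zero_le_one, ?_⟩
    subst hy
    simp
  -- main case : y ≠ 0
  have hy2 : (0:ℝ) < ‖y‖ ^ (2:ℕ) := by
    have : 0 < ‖y‖ := norm_pos_iff.2 hy
    positivity
  set Q : ℝ → ℝ := fun s => ‖x‖ ^ (2:ℕ) + 2 * s * ⟪x, y⟫ + s ^ (2:ℕ) * ‖y‖ ^ (2:ℕ) with hQdef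
  set R : ℝ → ℝ := fun s => ⟪x, y⟫ + s * ‖y‖ ^ (2:ℕ) with hRdef
  have hQ : ∀ s : ℝ, Q s = ‖x + s • y‖ ^ (2:ℕ) := by
    intro s
    rw [hQdef]
    simp only
    rw [norm_add_sq_real, real_inner_smul_right, norm_smul, mul_pow, Real.norm_eq_abs, sq_abs]
    ring
  have hR : ∀ s : ℝ, R s = ⟪x + s • y, y⟫ := by
    intro s
    rw [hRdef]
    simp only
    rw [inner_add_left, real_inner_smul_left, real_inner_self_eq_norm_sq]
  have hQnn : ∀ s : ℝ, 0 ≤ Q s := by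
    intro s; rw [hQ s]; positivity
  have hQ' : ∀ s : ℝ, HasDerivAt Q (2 * R s) s := by
    intro s
    have hA : HasDerivAt (fun t : ℝ => 2 * t * ⟪x, y⟫) (2 * ⟪x, y⟫) s := by
      simpa using ((hasDerivAt_id s).const_mul (2:ℝ)).mul_const (⟪x, y⟫ : ℝ)
    have hB : HasDerivAt (fun t : ℝ => t ^ (2:ℕ) * ‖y‖ ^ (2:ℕ)) (2 * s * ‖y‖ ^ (2:ℕ)) s := by
      have := (hasDerivAt_pow 2 s).mul_const (‖y‖ ^ (2:ℕ))
      refine this.congr_deriv ?_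
      push_cast; ring
    have := (hA.const_add (‖x‖ ^ (2:ℕ))).add hB
    refine this.congr_deriv ?_
    rw [hRdef]; ring
  have hR' : ∀ s : ℝ, HasDerivAt R (‖y‖ ^ (2:ℕ)) s := by
    intro s
    have := ((hasDerivAt_id' s).mul_const (‖y‖ ^ (2:ℕ))).const_add (⟪x, y⟫ : ℝ)
    rw [one_mul] at this; exact this
  set g : ℝ → ℝ := fun s => (Q s) ^ (p / 2) with hgdef
  set G : ℝ → ℝ := fun s => p * ((Q s) ^ ((p - 2) / 2) * R s) with hGdef
  have hg' : ∀ s : ℝ, HasDerivAt g (G s) s := by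
    intro s
    have h1 : HasDerivAt (fun t : ℝ => t ^ (p / 2)) ((p / 2) * (Q s) ^ (p / 2 - 1)) (Q s) :=
      Real.hasDerivAt_rpow_const (Or.inr (by linarith))
    have h2 : HasDerivAt g ((p / 2) * (Q s) ^ (p / 2 - 1) * (2 * R s)) s := h1.comp s (hQ' s)
    convert h2 using 1
    rw [hGdef, show (p - 2) / 2 = p / 2 - 1 by ring]
    ring
  -- the possible singular point
  set s0 : ℝ := -⟪x, y⟫ / ‖y‖ ^ (2:ℕ) with hs0def
  have hQsq : ∀ s : ℝ, Q s = ‖y‖ ^ (2:ℕ) * (s - s0) ^ (2:ℕ) + Q s0 := by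
    intro s
    rw [hQdef, hs0def]
    field_simp
    ring
  have hQpos : ∀ s : ℝ, s ≠ s0 → 0 < Q s := by
    intro s hs
    have h1 : 0 < (s - s0) ^ (2:ℕ) := pow_two_pos_of_ne_zero (sub_ne_zero.2 hs)
    have h2 := hQnn s0
    have := hQsq s
    nlinarith
  -- the maximum point τ
  have hcont : Continuous fun s : ℝ => ‖x + s • y‖ := by fun_prop
  obtain ⟨τ, hτmem, hτmax⟩ :=
    isCompact_Icc.exists_isMaxOn (Set.nonempty_Icc.2 zero_le_one) hcont.continuousOn
  have hτ : ∀ s ∈ Set.Icc (0:ℝ) 1, ‖x + s • y‖ ≤ ‖x + τ • y‖ := fun s hs => hτmax hs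
  set M : ℝ := p * (p - 1) * ‖x + τ • y‖ ^ (p - 2) * ‖y‖ ^ (2:ℕ) with hMdef
  have hQC : ∀ s ∈ Set.Icc (0:ℝ) 1, (Q s) ^ ((p - 2) / 2) ≤ ‖x + τ • y‖ ^ (p - 2) := by
    intro s hs
    rw [hQ s, sq_rpow_aux, show 2 * ((p - 2) / 2) = p - 2 by ring]
    exact Real.rpow_le_rpow (norm_nonneg _) (hτ s hs) (by linarith)
  -- derivative bound for G away from s0
  have hG' : ∀ s : ℝ, s ≠ s0 → s ∈ Set.Icc (0:ℝ) 1 →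
      ∃ d : ℝ, HasDerivAt G d s ∧ d ≤ M := by
    intro s hs hmem
    have hQne : Q s ≠ 0 := (hQpos s hs).ne'
    have h1 : HasDerivAt (fun t : ℝ => t ^ ((p - 2) / 2))
        (((p - 2) / 2) * (Q s) ^ ((p - 2) / 2 - 1)) (Q s) :=
      Real.hasDerivAt_rpow_const (Or.inl hQne)
    have h2 : HasDerivAt (fun u : ℝ => (Q u) ^ ((p - 2) / 2))
        (((p - 2) / 2) * (Q s) ^ ((p - 2) / 2 - 1) * (2 * R s)) s := h1.comp s (hQ' s)
    have h3 := (h2.mul (hR' s)).const_mul p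
    refine ⟨_, h3, ?_⟩
    -- bound the derivative
    have hCS : (R s) ^ (2:ℕ) ≤ Q s * ‖y‖ ^ (2:ℕ) := by
      rw [hR s, hQ s]
      have h := real_inner_mul_inner_self_le (x + s • y) y
      rw [real_inner_self_eq_norm_sq, real_inner_self_eq_norm_sq] at h
      nlinarith [h]
    have hfold : (Q s) ^ ((p - 2) / 2 - 1) * Q s = (Q s) ^ ((p - 2) / 2) := by
      rw [show (p - 2) / 2 = (p - 2) / 2 - 1 + 1 by ring, Real.rpow_add_one hQne]
      rw [show (p - 2) / 2 - 1 + 1 - 1 = (p - 2) / 2 - 1 by ring]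
    have hQc1 : (0:ℝ) ≤ (Q s) ^ ((p - 2) / 2 - 1) := Real.rpow_nonneg (hQnn s) _
    have hQc2 : (0:ℝ) ≤ (Q s) ^ ((p - 2) / 2) := Real.rpow_nonneg (hQnn s) _
    have hstep : (Q s) ^ ((p - 2) / 2 - 1) * (R s) ^ (2:ℕ) ≤ (Q s) ^ ((p - 2) / 2) * ‖y‖ ^ (2:ℕ) := by
      calc (Q s) ^ ((p - 2) / 2 - 1) * (R s) ^ (2:ℕ)
          ≤ (Q s) ^ ((p - 2) / 2 - 1) * (Q s * ‖y‖ ^ (2:ℕ)) :=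
            mul_le_mul_of_nonneg_left hCS hQc1
        _ = (Q s) ^ ((p - 2) / 2) * ‖y‖ ^ (2:ℕ) := by rw [← hfold]; ring
    have hQle : (Q s) ^ ((p - 2) / 2) ≤ ‖x + τ • y‖ ^ (p - 2) := hQC s hmem
    have hyn : (0:ℝ) ≤ ‖y‖ ^ (2:ℕ) := le_of_lt hy2
    have hp2 : (0:ℝ) ≤ p - 2 := by linarith
    have hp0 : (0:ℝ) < p := by linarith
    have hexp : p * (((p - 2) / 2) * (Q s) ^ ((p - 2) / 2 - 1) * (2 * R s) * R s
        + (Q s) ^ ((p - 2) / 2) * ‖y‖ ^ (2:ℕ))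
        = p * (p - 2) * ((Q s) ^ ((p - 2) / 2 - 1) * (R s) ^ (2:ℕ))
          + p * ((Q s) ^ ((p - 2) / 2) * ‖y‖ ^ (2:ℕ)) := by ring
    rw [hexp]
    have hb1 : p * (p - 2) * ((Q s) ^ ((p - 2) / 2 - 1) * (R s) ^ (2:ℕ))
        ≤ p * (p - 2) * ((Q s) ^ ((p - 2) / 2) * ‖y‖ ^ (2:ℕ)) :=
      mul_le_mul_of_nonneg_left hstep (by positivity)
    have hb2 : (Q s) ^ ((p - 2) / 2) * ‖y‖ ^ (2:ℕ) ≤ ‖x + τ • y‖ ^ (p - 2) * ‖y‖ ^ (2:ℕ) :=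
      mul_le_mul_of_nonneg_right hQle hyn
    have : p * (p - 2) * ((Q s) ^ ((p - 2) / 2) * ‖y‖ ^ (2:ℕ)) + p * ((Q s) ^ ((p - 2) / 2) * ‖y‖ ^ (2:ℕ))
        = p * (p - 1) * ((Q s) ^ ((p - 2) / 2) * ‖y‖ ^ (2:ℕ)) := by ring
    nlinarith [hb1, hb2, hQc2, hyn, mul_le_mul_of_nonneg_left hb2 (le_of_lt hp0)]
  -- continuity of G
  have hQcont : Continuous Q := by rw [hQdef]; fun_prop
  have hRcont : Continuous R := by rw [hRdef]; fun_prop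
  have hGcont : Continuous G := by
    rw [hGdef]
    exact continuous_const.mul
      ((hQcont.rpow_const (fun s => Or.inr (by linarith))).mul hRcont)
  -- θ and its monotonicity
  set θ : ℝ → ℝ := fun s => M * s + G 0 - G s with hθdef
  have hθcont : Continuous θ := by
    rw [hθdef]
    exact ((continuous_const.mul continuous_id).add continuous_const).sub hGcont
  have hθmono : ∀ a b : ℝ, 0 ≤ a → b ≤ 1 → (∀ s ∈ Set.Ioo a b, s ≠ s0) →
      MonotoneOn θ (Set.Icc a b) := by
    intro a b ha hb hav
    have hder : ∀ s ∈ Set.Ioo a b, ∃ d : ℝ, HasDerivAt θ (M - d) s ∧ d ≤ M := by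
      intro s hs
      have hmem : s ∈ Set.Icc (0:ℝ) 1 := ⟨le_of_lt (lt_of_le_of_lt ha hs.1),
        le_of_lt (lt_of_lt_of_le hs.2 hb)⟩
      obtain ⟨d, hd, hdM⟩ := hG' s (hav s hs) hmem
      have h1 : HasDerivAt (fun t : ℝ => M * t + G 0) M s := by
        simpa using ((hasDerivAt_id s).const_mul M).add_const (G 0)
      exact ⟨d, h1.sub hd, hdM⟩
    apply monotoneOn_of_deriv_nonneg (convex_Icc a b) hθcont.continuousOn
    · intro s hs
      rw [interior_Icc] at hs
      obtain ⟨d, hd, _⟩ := hder s hs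
      exact hd.differentiableAt.differentiableWithinAt
    · intro s hs
      rw [interior_Icc] at hs
      obtain ⟨d, hd, hdM⟩ := hder s hs
      rw [hd.deriv]
      linarith
  -- θ is nonnegative on [0,1]
  set c0 : ℝ := max 0 (min s0 1) with hc0def
  have hc0mem : c0 ∈ Set.Icc (0:ℝ) 1 := ⟨le_max_left _ _,
    max_le zero_le_one (min_le_right _ _)⟩
  have m1 : MonotoneOn θ (Set.Icc 0 c0) := by
    apply hθmono 0 c0 le_rfl hc0mem.2
    intro s hs heq
    rw [heq] at hs
    have h1 : c0 ≤ s0 := max_le hs.1.le (min_le_left _ _)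
    exact absurd hs.2 (not_lt.2 h1)
  have m2 : MonotoneOn θ (Set.Icc c0 1) := by
    apply hθmono c0 1 hc0mem.1 le_rfl
    intro s hs heq
    rw [heq] at hs
    have h1 : min s0 1 = s0 := min_eq_left hs.2.le
    have h2 : s0 ≤ c0 := by rw [hc0def, h1]; exact le_max_right _ _
    exact absurd hs.1 (not_lt.2 h2)
  have hθ0 : θ 0 = 0 := by rw [hθdef]; simp
  have hθnn : ∀ s ∈ Set.Icc (0:ℝ) 1, 0 ≤ θ s := by
    intro s hs
    rcases le_total s c0 with h | h
    · have := m1 (Set.left_mem_Icc.2 hc0mem.1) ⟨hs.1, h⟩ hs.1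
      rwa [hθ0] at this
    · have h1 := m1 (Set.left_mem_Icc.2 hc0mem.1) (Set.right_mem_Icc.2 hc0mem.1) hc0mem.1
      have h2 := m2 (Set.left_mem_Icc.2 hc0mem.2) ⟨h, hs.2⟩ h
      rw [hθ0] at h1
      linarith
  -- ψ and its monotonicity
  set ψ : ℝ → ℝ := fun s => M / 2 * s ^ (2:ℕ) + (g 0 + s * G 0) - g s with hψdef
  have hψ' : ∀ s : ℝ, HasDerivAt ψ (θ s) s := by
    intro s
    have h1 : HasDerivAt (fun t : ℝ => M / 2 * t ^ (2:ℕ)) (M * s) s := by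
      have := (hasDerivAt_pow 2 s).const_mul (M / 2)
      refine this.congr_deriv ?_
      push_cast; ring
    have h2 : HasDerivAt (fun t : ℝ => g 0 + t * G 0) (G 0) s := by
      simpa using ((hasDerivAt_id s).mul_const (G 0)).const_add (g 0)
    have := (h1.add h2).sub (hg' s)
    exact this
  have hψmono : MonotoneOn ψ (Set.Icc (0:ℝ) 1) :=
    monotoneOn_of_deriv_nonneg (convex_Icc 0 1)
      (fun s _ => (hψ' s).differentiableAt.continuousAt.continuousWithinAt)
      (fun s _ => (hψ' s).differentiableAt.differentiableWithinAt)
      (fun s hs => by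
        rw [interior_Icc] at hs
        rw [(hψ' s).deriv]
        exact hθnn s ⟨hs.1.le, hs.2.le⟩)
  have hkey : ψ 0 ≤ ψ 1 :=
    hψmono (Set.left_mem_Icc.2 zero_le_one) (Set.right_mem_Icc.2 zero_le_one) zero_le_one
  -- translate back
  refine ⟨τ, hτmem, ?_⟩
  have e1 : g 1 = ‖x + y‖ ^ p := by
    rw [hgdef]
    simp only
    rw [hQ 1, one_smul, sq_rpow_aux, show 2 * (p / 2) = p by ring]
  have e2 : g 0 = ‖x‖ ^ p := by
    rw [hgdef]
    simp only
    rw [hQ 0, zero_smul, add_zero, sq_rpow_aux, show 2 * (p / 2) = p by ring]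
  have e3 : G 0 = p * ‖x‖ ^ (p - 2) * ⟪x, y⟫ := by
    rw [hGdef, hRdef]
    simp only
    rw [hQ 0, zero_smul, add_zero, sq_rpow_aux, show 2 * ((p - 2) / 2) = p - 2 by ring]
    ring
  have e4 : ψ 0 = 0 := by rw [hψdef]; simp
  have e5 : ψ 1 = M / 2 + g 0 + G 0 - g 1 := by rw [hψdef]; ring_nf
  have e6 : (1 / 2) * p * (p - 1) * ‖x + τ • y‖ ^ (p - 2) * ‖y‖ ^ (2:ℕ) = M / 2 := by
    rw [hMdef]; ring
  rw [e6]
  rw [e4, e5, e1, e2, e3] at hkey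
  linarith
end

section
/- Let H be a real inner product space and let p ≥ 2 be a real number. Then for all x, y ∈ H, ‖x+y‖^p − ‖x‖^p − p‖x‖^{p−2}⟨x,y⟩ ≤ (1/2)·p·(p−1)·((2^{p−2}+1)·‖x‖^{p−2}·‖y‖² + 2^{p−2}·‖y‖^p). -/
open scoped RealInnerProductSpace

private lemma le_of_hasDerivAt_nonpos {g g' : ℝ → ℝ} {v : ℝ}
    (hd : ∀ s, HasDerivAt g (g' s) s) (h0 : ∀ s ∈ Set.Ioo (0:ℝ) v, g' s ≤ 0)
    (hv : 0 ≤ v) : g v ≤ g 0 := by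
  have hA : AntitoneOn g (Set.Icc 0 v) := by
    apply antitoneOn_of_deriv_nonpos (convex_Icc 0 v)
      (fun s _ => (hd s).continuousAt.continuousWithinAt)
      (fun s _ => (hd s).differentiableAt.differentiableWithinAt)
    intro s hs
    rw [interior_Icc] at hs
    rw [(hd s).deriv]
    exact h0 s hs
  exact hA (Set.left_mem_Icc.2 hv) (Set.right_mem_Icc.2 hv) hv

private lemma taylorA {p u v : ℝ} (hp : 2 ≤ p) (hu : 0 ≤ u) (hv : 0 ≤ v) :
    (u + v) ^ p ≤ u ^ p + p * u ^ (p-1) * v + (1/2) * p * (p-1) * (u+v) ^ (p-2) * v ^ 2 := by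
  have hp1 : (1:ℝ) ≤ p - 1 := by linarith
  have hp0 : (1:ℝ) ≤ p := by linarith
  set K : ℝ := p * (p-1) * (u+v) ^ (p-2) with hK
  have hd1 : ∀ s : ℝ, HasDerivAt (fun s => p * (u+s) ^ (p-1) - K * s)
      (p * ((p-1) * (u+s) ^ (p-1-1)) - K) s := by
    intro s
    have h1 : HasDerivAt (fun s : ℝ => (u+s) ^ (p-1)) ((p-1) * (u+s) ^ (p-1-1) * 1) s :=
      (Real.hasDerivAt_rpow_const (x := u+s) (p := p-1) (Or.inr hp1)).comp s
        ((hasDerivAt_id s).const_add u)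
    exact ((h1.const_mul p).sub ((hasDerivAt_id s).const_mul K)).congr_deriv (by ring)
  have hg1 : ∀ s ∈ Set.Icc (0:ℝ) v, p * (u+s) ^ (p-1) - K * s ≤ p * u ^ (p-1) := by
    intro s hs
    have := le_of_hasDerivAt_nonpos (v := s) hd1 ?_ hs.1
    · simpa using this
    · intro t ht
      have htv : (0:ℝ) ≤ t := le_of_lt ht.1
      have h2 : (u+t) ^ (p-2) ≤ (u+v) ^ (p-2) := by
        apply Real.rpow_le_rpow (by linarith) (by
          have := ht.2; have := hs.2; linarith) (by linarith)
      have hpn : (0:ℝ) ≤ p * (p-1) := by nlinarith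
      have : p * ((p-1) * (u+t) ^ (p-1-1)) ≤ K := by
        rw [hK]
        have he : p - 1 - 1 = p - 2 := by ring
        rw [he]
        nlinarith [h2]
      linarith
  have hd2 : ∀ s : ℝ, HasDerivAt
      (fun s => (u+s) ^ p - p * u ^ (p-1) * s - (1/2) * K * s ^ 2)
      (p * (u+s) ^ (p-1) - p * u ^ (p-1) - K * s) s := by
    intro s
    have h1 : HasDerivAt (fun s : ℝ => (u+s) ^ p) (p * (u+s) ^ (p-1) * 1) s :=
      (Real.hasDerivAt_rpow_const (x := u+s) (p := p) (Or.inr hp0)).comp s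
        ((hasDerivAt_id s).const_add u)
    have h2 : HasDerivAt (fun s : ℝ => s ^ 2) (2 * s) s := by
      simpa using hasDerivAt_pow 2 s
    have := (h1.sub ((hasDerivAt_id s).const_mul (p * u ^ (p-1)))).sub
      (h2.const_mul ((1/2) * K))
    exact this.congr_deriv (by ring)
  have hfinal := le_of_hasDerivAt_nonpos (v := v) hd2 ?_ hv
  · simp only [add_zero, mul_zero, sub_zero] at hfinal
    rw [hK] at hfinal
    nlinarith [hfinal]
  · intro t ht
    have := hg1 t ⟨le_of_lt ht.1, le_of_lt ht.2⟩
    linarith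

private lemma taylorB {p u v : ℝ} (hp : 2 ≤ p) (hv : 0 ≤ v) (hvu : v ≤ u) :
    (u - v) ^ p ≤ u ^ p - p * u ^ (p-1) * v + (1/2) * p * (p-1) * u ^ (p-2) * v ^ 2 := by
  have hp1 : (1:ℝ) ≤ p - 1 := by linarith
  have hp0 : (1:ℝ) ≤ p := by linarith
  have hu : (0:ℝ) ≤ u := le_trans hv hvu
  set K : ℝ := p * (p-1) * u ^ (p-2) with hK
  have hd1 : ∀ s : ℝ, HasDerivAt (fun s => -(p * (u-s) ^ (p-1)) - K * s)
      (p * ((p-1) * (u-s) ^ (p-1-1)) - K) s := by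
    intro s
    have h1 : HasDerivAt (fun s : ℝ => (u-s) ^ (p-1)) ((p-1) * (u-s) ^ (p-1-1) * (-1)) s :=
      (Real.hasDerivAt_rpow_const (x := u-s) (p := p-1) (Or.inr hp1)).comp s
        ((hasDerivAt_id s).const_sub u)
    have := ((h1.const_mul p).neg).sub ((hasDerivAt_id s).const_mul K)
    exact this.congr_deriv (by ring)
  have hg1 : ∀ s ∈ Set.Icc (0:ℝ) v, -(p * (u-s) ^ (p-1)) - K * s ≤ -(p * u ^ (p-1)) := by
    intro s hs
    have := le_of_hasDerivAt_nonpos (v := s) hd1 ?_ hs.1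
    · simpa using this
    · intro t ht
      have h2 : (u-t) ^ (p-2) ≤ u ^ (p-2) := by
        apply Real.rpow_le_rpow (by
          have := ht.2; have := hs.2; linarith) (by linarith [ht.1]) (by linarith)
      have hpn : (0:ℝ) ≤ p * (p-1) := by nlinarith
      have he : p - 1 - 1 = p - 2 := by ring
      rw [he, hK]
      nlinarith [h2]
  have hd2 : ∀ s : ℝ, HasDerivAt
      (fun s => (u-s) ^ p + p * u ^ (p-1) * s - (1/2) * K * s ^ 2)
      ((-(p * (u-s) ^ (p-1)) - K * s) - (-(p * u ^ (p-1)))) s := by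
    intro s
    have h1 : HasDerivAt (fun s : ℝ => (u-s) ^ p) (p * (u-s) ^ (p-1) * (-1)) s :=
      (Real.hasDerivAt_rpow_const (x := u-s) (p := p) (Or.inr hp0)).comp s
        ((hasDerivAt_id s).const_sub u)
    have h2 : HasDerivAt (fun s : ℝ => s ^ 2) (2 * s) s := by
      simpa using hasDerivAt_pow 2 s
    have := (h1.add ((hasDerivAt_id s).const_mul (p * u ^ (p-1)))).sub
      (h2.const_mul ((1/2) * K))
    exact this.congr_deriv (by ring)
  have hfinal := le_of_hasDerivAt_nonpos (v := v) hd2 ?_ hv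
  · simp only [sub_zero, mul_zero, add_zero] at hfinal
    rw [hK] at hfinal
    nlinarith [hfinal]
  · intro t ht
    have := hg1 t ⟨le_of_lt ht.1, le_of_lt ht.2⟩
    linarith

private lemma sq_rpow_half (a p : ℝ) (ha : 0 ≤ a) : (a ^ 2) ^ (p/2) = a ^ p := by
  rw [← Real.rpow_natCast a 2, ← Real.rpow_mul ha,
    show ((2:ℕ):ℝ) * (p/2) = p by push_cast; ring]

private lemma doubling {p a b : ℝ} (hp : 2 ≤ p) (ha : 0 ≤ a) (hb : 0 ≤ b) :
    (a + b) ^ (p-2) ≤ 2 ^ (p-2) * (a ^ (p-2) + b ^ (p-2)) := by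
  have h1 : a + b ≤ 2 * max a b := by
    have := le_max_left a b; have := le_max_right a b; linarith
  have h2 : (a + b) ^ (p-2) ≤ (2 * max a b) ^ (p-2) :=
    Real.rpow_le_rpow (by linarith) h1 (by linarith)
  have h3 : (2 * max a b : ℝ) ^ (p-2) = 2 ^ (p-2) * (max a b) ^ (p-2) :=
    Real.mul_rpow (by norm_num) (le_max_of_le_left ha)
  have h4 : (max a b) ^ (p-2) ≤ a ^ (p-2) + b ^ (p-2) := by
    rcases max_choice a b with h | h <;> rw [h]
    · nlinarith [Real.rpow_nonneg hb (p-2)]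
    · nlinarith [Real.rpow_nonneg ha (p-2)]
  have h5 : (0:ℝ) ≤ (2:ℝ) ^ (p-2) := Real.rpow_nonneg (by norm_num) _
  calc (a + b) ^ (p-2) ≤ 2 ^ (p-2) * (max a b) ^ (p-2) := by rw [← h3]; exact h2
    _ ≤ 2 ^ (p-2) * (a ^ (p-2) + b ^ (p-2)) := by nlinarith

private lemma pow_split {p v : ℝ} (hp : 2 ≤ p) (hv : 0 ≤ v) :
    v ^ p = v ^ (p-2) * v ^ 2 := by
  have h : v ^ p = v ^ ((p-2) + 2) := by ring_nf
  rw [h, Real.rpow_add' hv (by intro hc; linarith [hc])]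
  congr 1
  rw [show ((2:ℝ)) = ((2:ℕ):ℝ) by norm_num, Real.rpow_natCast]

private lemma pow_split1 {p u : ℝ} (hp : 2 ≤ p) (hu : 0 ≤ u) :
    u ^ (p-1) = u ^ (p-2) * u := by
  have h : u ^ (p-1) = u ^ ((p-2) + 1) := by ring_nf
  rw [h, Real.rpow_add' hu (by intro hc; linarith [hc]), Real.rpow_one]

private lemma boundPlus {p u v : ℝ} (hp : 2 ≤ p) (hu : 0 ≤ u) (hv : 0 ≤ v) :
    ((u + v) ^ 2) ^ (p/2) - u ^ p - p * u ^ (p-2) * (u * v) ≤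
      (1/2) * p * (p-1) * ((2 ^ (p-2) + 1) * u ^ (p-2) * v ^ 2 + 2 ^ (p-2) * v ^ p) := by
  rw [sq_rpow_half _ _ (by linarith)]
  have hA := taylorA hp hu hv
  have hD := doubling hp hu hv
  have h1 : p * u ^ (p-2) * (u * v) = p * u ^ (p-1) * v := by
    rw [pow_split1 hp hu]; ring
  rw [h1]
  have hvp : v ^ p = v ^ (p-2) * v ^ 2 := pow_split hp hv
  have hhalf : (0:ℝ) ≤ (1/2) * p * (p-1) := by nlinarith
  have hvv : (0:ℝ) ≤ v ^ 2 := sq_nonneg v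
  have hup : (0:ℝ) ≤ u ^ (p-2) := Real.rpow_nonneg hu _
  have h2 := mul_le_mul_of_nonneg_right (mul_le_mul_of_nonneg_left hD hhalf) hvv
  have t0 : (0:ℝ) ≤ (1/2) * p * (p-1) * (u ^ (p-2) * v ^ 2) :=
    mul_nonneg hhalf (mul_nonneg hup hvv)
  rw [hvp]
  linarith [hA, h2, t0]

private lemma boundMinus {p u v : ℝ} (hp : 2 ≤ p) (hu : 0 ≤ u) (hv : 0 ≤ v) :
    ((u - v) ^ 2) ^ (p/2) - u ^ p - p * u ^ (p-2) * (-(u * v)) ≤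
      (1/2) * p * (p-1) * ((2 ^ (p-2) + 1) * u ^ (p-2) * v ^ 2 + 2 ^ (p-2) * v ^ p) := by
  have hup : (0:ℝ) ≤ u ^ (p-2) := Real.rpow_nonneg hu _
  have h2p : (1:ℝ) ≤ (2:ℝ) ^ (p-2) := Real.one_le_rpow (by norm_num) (by linarith)
  have hvp : (0:ℝ) ≤ v ^ p := Real.rpow_nonneg hv _
  have hvv : (0:ℝ) ≤ v ^ 2 := sq_nonneg v
  have hhalf : (0:ℝ) ≤ (1/2) * p * (p-1) := by nlinarith
  rcases le_or_gt v u with hvu | huv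
  · have key : ((u - v) ^ 2) ^ (p/2) = (u - v) ^ p := sq_rpow_half _ _ (by linarith)
    rw [key]
    have hB := taylorB hp hv hvu
    have h1 : p * u ^ (p-2) * (u * v) = p * u ^ (p-1) * v := by
      rw [pow_split1 hp hu]; ring
    have t1 : (0:ℝ) ≤ (1/2) * p * (p-1) * (2 ^ (p-2) * (u ^ (p-2) * v ^ 2)) :=
      mul_nonneg hhalf (mul_nonneg (by linarith) (mul_nonneg hup hvv))
    have t2 : (0:ℝ) ≤ (1/2) * p * (p-1) * (2 ^ (p-2) * v ^ p) :=
      mul_nonneg hhalf (mul_nonneg (by linarith) hvp)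
    nlinarith [hB, h1, t1, t2]
  · have key : ((u - v) ^ 2) ^ (p/2) = (v - u) ^ p := by
      rw [show (u-v)^2 = (v-u)^2 by ring]; exact sq_rpow_half _ _ (by linarith)
    rw [key]
    have h1 : (v - u) ^ p ≤ v ^ p :=
      Real.rpow_le_rpow (by linarith) (by linarith) (by linarith)
    have h2 : p * u ^ (p-2) * (u * v) ≤ p * u ^ (p-2) * v ^ 2 := by
      have huv2 : u * v ≤ v ^ 2 := by nlinarith
      have : (0:ℝ) ≤ p * u ^ (p-2) := mul_nonneg (by linarith) hup
      nlinarith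
    have cA : (1:ℝ) ≤ (1/2) * p * (p-1) := by nlinarith
    have h3 : v ^ p ≤ (1/2) * p * (p-1) * (2 ^ (p-2) * v ^ p) := by
      have hc : (1:ℝ) ≤ (1/2) * p * (p-1) * 2 ^ (p-2) := by nlinarith [cA, h2p]
      nlinarith [mul_le_mul_of_nonneg_right hc hvp]
    have h4 : p * (u ^ (p-2) * v ^ 2) ≤
        (1/2) * p * (p-1) * ((2 ^ (p-2) + 1) * (u ^ (p-2) * v ^ 2)) := by
      have hc : p ≤ (1/2) * p * (p-1) * (2 ^ (p-2) + 1) := by nlinarith [h2p]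
      have := mul_le_mul_of_nonneg_right hc (mul_nonneg hup hvv)
      linarith [this]
    have hupow : (0:ℝ) ≤ u ^ p := Real.rpow_nonneg hu _
    nlinarith [h1, h2, h3, h4, hupow]

private lemma scalar_main (p u v w : ℝ) (hp : 2 ≤ p) (hu : 0 ≤ u) (hv : 0 ≤ v)
    (hw : |w| ≤ u * v) :
    (u ^ 2 + 2 * w + v ^ 2) ^ (p/2) - u ^ p - p * u ^ (p-2) * w ≤
      (1/2) * p * (p-1) * ((2 ^ (p-2) + 1) * u ^ (p-2) * v ^ 2 + 2 ^ (p-2) * v ^ p) := by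
  have hw1 : -(u*v) ≤ w := neg_le_of_abs_le hw
  have hw2 : w ≤ u * v := le_of_abs_le hw
  have hhalf : (0:ℝ) ≤ (1/2) * p * (p-1) := by nlinarith
  rcases eq_or_lt_of_le (mul_nonneg hu hv) with h0 | h0
  · -- u*v = 0, hence w = 0
    have hw0 : w = 0 := by
      have habs : |w| = 0 := le_antisymm (h0 ▸ hw) (abs_nonneg w)
      exact abs_eq_zero.1 habs
    subst hw0
    rcases mul_eq_zero.1 h0.symm with h | h
    · subst h
      have key : ((0:ℝ) ^ 2 + 2 * 0 + v ^ 2) ^ (p/2) = v ^ p := by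
        rw [show ((0:ℝ) ^ 2 + 2 * 0 + v ^ 2) = v ^ 2 by ring]
        exact sq_rpow_half _ _ hv
      rw [key, Real.zero_rpow (by intro hc; linarith [hc])]
      have h2p : (1:ℝ) ≤ (2:ℝ) ^ (p-2) := Real.one_le_rpow (by norm_num) (by linarith)
      have hvp : (0:ℝ) ≤ v ^ p := Real.rpow_nonneg hv _
      have h0p2 : (0:ℝ) ≤ (0:ℝ) ^ (p-2) := Real.rpow_nonneg le_rfl _
      have hvv : (0:ℝ) ≤ v ^ 2 := sq_nonneg v
      have cA : (1:ℝ) ≤ (1/2) * p * (p-1) := by nlinarith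
      have hc : (1:ℝ) ≤ (1/2) * p * (p-1) * 2 ^ (p-2) := by nlinarith [cA, h2p]
      have t1 := mul_le_mul_of_nonneg_right hc hvp
      have t2 : (0:ℝ) ≤ (1/2) * p * (p-1) * ((2 ^ (p-2) + 1) * ((0:ℝ) ^ (p-2) * v ^ 2)) :=
        mul_nonneg hhalf (mul_nonneg (by linarith) (mul_nonneg h0p2 hvv))
      nlinarith [t1, t2]
    · subst h
      have key : (u ^ 2 + 2 * 0 + (0:ℝ) ^ 2) ^ (p/2) = u ^ p := by
        rw [show (u ^ 2 + 2 * 0 + (0:ℝ) ^ 2) = u ^ 2 by ring]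
        exact sq_rpow_half _ _ hu
      rw [key, Real.zero_rpow (by intro hc; linarith [hc])]
      have hup : (0:ℝ) ≤ u ^ (p-2) := Real.rpow_nonneg hu _
      nlinarith
  · -- 0 < u*v
    set l : ℝ := (w + u*v) / (2*(u*v)) with hl
    have hl0 : 0 ≤ l := div_nonneg (by linarith) (by linarith)
    have hl1 : l ≤ 1 := by
      rw [hl, div_le_one (by linarith)]
      linarith
    have hcomb : u ^ 2 + 2 * w + v ^ 2 = (1-l) * ((u-v)^2) + l * ((u+v)^2) := by
      have hu0 : u ≠ 0 := left_ne_zero_of_mul h0.ne'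
      have hv0 : v ≠ 0 := right_ne_zero_of_mul h0.ne'
      rw [hl]; field_simp; ring
    have hwcomb : w = (1-l) * (-(u*v)) + l * (u*v) := by
      have hu0 : u ≠ 0 := left_ne_zero_of_mul h0.ne'
      have hv0 : v ≠ 0 := right_ne_zero_of_mul h0.ne'
      rw [hl]; field_simp; ring
    have hconv := (convexOn_rpow (p := p/2) (by linarith)).2
      (Set.mem_Ici.2 (sq_nonneg (u-v))) (Set.mem_Ici.2 (sq_nonneg (u+v)))
      (by linarith : (0:ℝ) ≤ 1 - l) hl0 (by ring)
    simp only [smul_eq_mul] at hconv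
    rw [hcomb]
    rw [hwcomb]
    have hm := boundMinus (p := p) (u := u) (v := v) hp hu hv
    have hpl := boundPlus (p := p) (u := u) (v := v) hp hu hv
    have hmm := mul_le_mul_of_nonneg_left hm (by linarith : (0:ℝ) ≤ 1 - l)
    have hpp := mul_le_mul_of_nonneg_left hpl hl0
    linarith [hconv, hmm, hpp]

/-- Pointwise bound for the jump term `D_s` in the proof of Theorem 3.8:
`‖x+y‖^p − ‖x‖^p − p‖x‖^{p−2}⟨x,y⟩
  ≤ (1/2)p(p−1)((2^{p−2}+1)‖x‖^{p−2}‖y‖² + 2^{p−2}‖y‖^p)`. -/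
theorem jump_term_pointwise_bound
    {H : Type*} [NormedAddCommGroup H] [InnerProductSpace ℝ H]
    (p : ℝ) (hp : 2 ≤ p) (x y : H) :
    ‖x + y‖ ^ p - ‖x‖ ^ p - p * ‖x‖ ^ (p - 2) * ⟪x, y⟫ ≤
      (1 / 2) * p * (p - 1) *
        (((2 : ℝ) ^ (p - 2) + 1) * ‖x‖ ^ (p - 2) * ‖y‖ ^ (2 : ℕ)
          + (2 : ℝ) ^ (p - 2) * ‖y‖ ^ p) := by
  have key : ‖x + y‖ ^ p = (‖x‖ ^ 2 + 2 * ⟪x, y⟫ + ‖y‖ ^ 2) ^ (p/2) := by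
    have h2 : ‖x + y‖ ^ 2 = ‖x‖ ^ 2 + 2 * ⟪x, y⟫ + ‖y‖ ^ 2 := norm_add_sq_real x y
    rw [← h2, ← Real.rpow_natCast ‖x + y‖ 2, ← Real.rpow_mul (norm_nonneg _),
      show ((2:ℕ):ℝ) * (p/2) = p by push_cast; ring]
  rw [key]
  exact scalar_main p ‖x‖ ‖y‖ ⟪x, y⟫ hp (norm_nonneg x) (norm_nonneg y)
    (abs_real_inner_le_norm x y)
end

section
/- Let (Ω, μ) be a measure space, let p ≥ 2 be a real number, set θ = (p−2)/(2(p−1)), and let f : Ω → [0,∞] be a measurable function. Then (∫ f² dμ)^{p/2} ≤ θ·(∫ f dμ)^p + (1−θ)·(∫ f^p dμ), where the integrals are Lebesgue integrals with values in [0,∞]. -/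
open MeasureTheory

/-- Interpolation plus weighted AM–GM (used in the proof of Theorem 2.3): with
`θ = (p−2)/(2(p−1))`, `(∫ f² dμ)^{p/2} ≤ θ·(∫ f dμ)^p + (1−θ)·∫ f^p dμ`. -/
theorem lintegral_sq_rpow_le_weighted_sum
    {Ω : Type*} [MeasurableSpace Ω] (μ : Measure Ω)
    (p : ℝ) (hp : 2 ≤ p)
    (θ : ℝ) (hθ : θ = (p - 2) / (2 * (p - 1)))
    (f : Ω → ENNReal) (hf : Measurable f) :
    (∫⁻ ω, f ω ^ (2 : ℝ) ∂μ) ^ (p / 2) ≤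
      ENNReal.ofReal θ * (∫⁻ ω, f ω ∂μ) ^ p
        + ENNReal.ofReal (1 - θ) * ∫⁻ ω, f ω ^ p ∂μ := by
  rcases eq_or_lt_of_le hp with hp2 | hp2
  · -- p = 2 : θ = 0 and the inequality is an equality
    subst hp2
    have hθ0 : θ = 0 := by rw [hθ]; norm_num
    subst hθ0
    simp
  -- now p > 2
  have hp1 : (p:ℝ) - 1 ≠ 0 := by linarith
  have hp2ne : (p:ℝ) - 2 ≠ 0 := by linarith
  have hθpos : 0 < θ := by
    rw [hθ]; apply div_pos <;> linarith
  have hθlt1 : θ < 1 := by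
    rw [hθ]
    rw [div_lt_one (by linarith)]
    linarith
  -- Step 1: Hölder with exponents q = (p-1)/(p-2), q' = p-1
  set q : ℝ := (p - 1) / (p - 2) with hq
  have hq' : q.HolderConjugate (p - 1) := by
    refine Real.holderConjugate_iff.mpr ⟨?_, ?_⟩
    · rw [hq, lt_div_iff₀ (by linarith)]; linarith
    · rw [hq]
      field_simp
      ring
  have holder :
      (∫⁻ ω, f ω ^ (2 : ℝ) ∂μ) ≤
        (∫⁻ ω, f ω ∂μ) ^ ((p - 2) / (p - 1)) *
          (∫⁻ ω, f ω ^ p ∂μ) ^ (1 / (p - 1)) := by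
    have key := ENNReal.lintegral_mul_le_Lp_mul_Lq μ hq'
      (f := fun ω => f ω ^ ((p - 2) / (p - 1)))
      (g := fun ω => f ω ^ (p / (p - 1)))
      ((hf.pow_const _).aemeasurable) ((hf.pow_const _).aemeasurable)
    have h1 : ∀ ω, (fun ω => f ω ^ ((p - 2) / (p - 1))) ω *
        (fun ω => f ω ^ (p / (p - 1))) ω = f ω ^ (2 : ℝ) := by
      intro ω
      rw [← ENNReal.rpow_add_of_nonneg _ _ (div_nonneg (by linarith) (by linarith))
        (div_nonneg (by linarith) (by linarith))]
      congr 1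
      field_simp
      ring
    have h2 : ∀ ω, (f ω ^ ((p - 2) / (p - 1))) ^ q = f ω := by
      intro ω
      rw [← ENNReal.rpow_mul, show ((p - 2) / (p - 1)) * q = 1 by
        rw [hq]; field_simp]
      exact ENNReal.rpow_one _
    have h3 : ∀ ω, (f ω ^ (p / (p - 1))) ^ (p - 1) = f ω ^ p := by
      intro ω
      rw [← ENNReal.rpow_mul]
      congr 1
      field_simp
    calc (∫⁻ ω, f ω ^ (2 : ℝ) ∂μ)
        = ∫⁻ ω, (fun ω => f ω ^ ((p - 2) / (p - 1))) ω *
            (fun ω => f ω ^ (p / (p - 1))) ω ∂μ := by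
          simp only [h1]
      _ ≤ (∫⁻ ω, (f ω ^ ((p - 2) / (p - 1))) ^ q ∂μ) ^ (1 / q) *
            (∫⁻ ω, (f ω ^ (p / (p - 1))) ^ (p - 1) ∂μ) ^ (1 / (p - 1)) := key
      _ = (∫⁻ ω, f ω ∂μ) ^ ((p - 2) / (p - 1)) *
            (∫⁻ ω, f ω ^ p ∂μ) ^ (1 / (p - 1)) := by
          simp only [h2, h3]
          congr 2
          rw [hq]
          rw [one_div_div]
  -- Step 2: raise to the power p/2
  have hp2' : (0 : ℝ) ≤ p / 2 := by positivity
  have step2 :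
      (∫⁻ ω, f ω ^ (2 : ℝ) ∂μ) ^ (p / 2) ≤
        ((∫⁻ ω, f ω ∂μ) ^ p) ^ θ * (∫⁻ ω, f ω ^ p ∂μ) ^ (1 - θ) := by
    calc (∫⁻ ω, f ω ^ (2 : ℝ) ∂μ) ^ (p / 2)
        ≤ ((∫⁻ ω, f ω ∂μ) ^ ((p - 2) / (p - 1)) *
            (∫⁻ ω, f ω ^ p ∂μ) ^ (1 / (p - 1))) ^ (p / 2) :=
          ENNReal.rpow_le_rpow holder hp2'
      _ = ((∫⁻ ω, f ω ∂μ) ^ p) ^ θ * (∫⁻ ω, f ω ^ p ∂μ) ^ (1 - θ) := by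
          rw [ENNReal.mul_rpow_of_nonneg _ _ hp2', ← ENNReal.rpow_mul,
            ← ENNReal.rpow_mul, ← ENNReal.rpow_mul]
          congr 2
          · rw [hθ]; field_simp
          · rw [hθ]; field_simp
            ring
  -- Step 3: Young / weighted AM-GM
  refine step2.trans ?_
  set X := (∫⁻ ω, f ω ∂μ) ^ p with hX
  set Y := ∫⁻ ω, f ω ^ p ∂μ with hY
  have hconj : (1/θ).HolderConjugate (1/(1-θ)) := by
    refine Real.holderConjugate_iff.mpr ⟨?_, ?_⟩
    · rw [lt_div_iff₀ hθpos]; linarith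
    · rw [one_div, inv_inv, one_div, inv_inv]; ring
  have young := ENNReal.young_inequality (X ^ θ) (Y ^ (1 - θ)) hconj
  have e1 : (X ^ θ) ^ (1/θ) = X := by
    rw [← ENNReal.rpow_mul, mul_one_div_cancel hθpos.ne', ENNReal.rpow_one]
  have e2 : (Y ^ (1-θ)) ^ (1/(1-θ)) = Y := by
    rw [← ENNReal.rpow_mul, mul_one_div_cancel (by linarith : (1:ℝ) - θ ≠ 0),
      ENNReal.rpow_one]
  rw [e1, e2] at young
  refine young.trans (le_of_eq ?_)
  rw [ENNReal.div_eq_inv_mul, ENNReal.div_eq_inv_mul]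
  congr 2
  · rw [one_div, ENNReal.ofReal_inv_of_pos hθpos, inv_inv]
  · rw [one_div, ENNReal.ofReal_inv_of_pos (by linarith : (0:ℝ) < 1 - θ), inv_inv]
end
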